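/- Let Φ be an M × LM matrix partitioned into L blocks Φ_k = diag(p_k)·H where H is the ±1 Walsh-Hadamard matrix of order M = 2^m and p_k is the ±1 modulation of the quadratic form Q_{π_k}. If r_min is the minimum over all pairs k₁ ≠ k₂ of rank_2(B_{k₁,k₂}), where B_{k₁,k₂} = (Q_{k₁}+Q_{k₂}) + (Q_{k₁}+Q_{k₂})ᵀ, then the coherence of the column-normalized Φ equals 1/√(2^{r_min}). -/

import Mathlib

open Matrix

/-- The quadratic form `x ↦ x Q xᵀ` associated to a quadratic matrix `Q` over `Z_2`. -/
def qmf {n : ℕ} (Q : Matrix (Fin n) (Fin n) (ZMod 2)) (x : Fin n → ZMod 2) : ZMod 2 :=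
  ∑ i, ∑ j, x i * Q i j * x j

/-- The normalized column of the Golay spreading matrix with quadratic matrix `Q`
and linear label `v`. -/
noncomputable def gcol {n : ℕ} (Q : Matrix (Fin n) (Fin n) (ZMod 2)) (v : Fin n → ZMod 2)
    (x : Fin n → ZMod 2) : ℝ :=
  (1 / Real.sqrt (2 ^ n)) * (-1 : ℝ) ^ (qmf Q x + ∑ r, v r * x r).val

open Finset

noncomputable def chi (a : ZMod 2) : ℝ := (-1 : ℝ) ^ a.val

lemma zmod2_cases : ∀ a : ZMod 2, a = 0 ∨ a = 1 := by decide

lemma chi_add (a b : ZMod 2) : chi (a + b) = chi a * chi b := by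
  rcases zmod2_cases a with h | h <;> rcases zmod2_cases b with h' | h' <;>
    subst h <;> subst h' <;>
    norm_num [chi, show ((0:ZMod 2)+0) = 0 from rfl, show ((0:ZMod 2)+1) = 1 from rfl,
      show ((1:ZMod 2)+0) = 1 from rfl, show ((1:ZMod 2)+1) = 0 from rfl,
      show ZMod.val (0 : ZMod 2) = 0 from rfl, show ZMod.val (1 : ZMod 2) = 1 from rfl,
      show ZMod.val (2 : ZMod 2) = 0 from rfl]

lemma chi_zero : chi 0 = 1 := by norm_num [chi, show ZMod.val (0 : ZMod 2) = 0 from rfl]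
lemma chi_one : chi 1 = -1 := by norm_num [chi, show ZMod.val (1 : ZMod 2) = 1 from rfl]
lemma abs_chi (a : ZMod 2) : |chi a| = 1 := by
  rcases zmod2_cases a with h | h <;> subst h <;> simp [chi_zero, chi_one]

lemma sum_chi_linear {n : ℕ} (u : Fin n → ZMod 2) :
    ∑ x : Fin n → ZMod 2, chi (∑ i, x i * u i) =
      if u = 0 then ((2 : ℝ) ^ n) else 0 := by
  split_ifs with h
  · subst h
    simp [chi_zero, Finset.card_univ]
  · obtain ⟨i₀, hi₀⟩ : ∃ i, u i ≠ 0 := by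
      by_contra hc; push_neg at hc; exact h (funext hc)
    have hu1 : u i₀ = 1 := (zmod2_cases (u i₀)).resolve_left hi₀
    set e : Fin n → ZMod 2 := fun j => if j = i₀ then 1 else 0 with he
    have key : ∀ x : Fin n → ZMod 2,
        chi (∑ i, (x + e) i * u i) = - chi (∑ i, x i * u i) := by
      intro x
      have h1 : ∑ i, (x + e) i * u i = (∑ i, x i * u i) + (∑ i, e i * u i) := by
        simp [add_mul, Finset.sum_add_distrib]
      have h2 : ∑ i, e i * u i = 1 := by
        simp [he, ite_mul, hu1]
      rw [h1, h2, chi_add, chi_one]; ring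
    have hs : ∑ x : Fin n → ZMod 2, chi (∑ i, x i * u i)
        = - ∑ x : Fin n → ZMod 2, chi (∑ i, x i * u i) := by
      conv_lhs => rw [← Equiv.sum_comp (Equiv.addRight e)
        (fun x => chi (∑ i, x i * u i))]
      simp only [Equiv.coe_addRight]
      rw [← Finset.sum_neg_distrib]
      exact Finset.sum_congr rfl fun x _ => key x
    linarith

lemma qmf_add_matrix {n : ℕ} (Q₁ Q₂ : Matrix (Fin n) (Fin n) (ZMod 2)) (x : Fin n → ZMod 2) :
    qmf (Q₁ + Q₂) x = qmf Q₁ x + qmf Q₂ x := by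
  simp [qmf, Matrix.add_apply, mul_add, add_mul, Finset.sum_add_distrib]

lemma qmf_zero_arg {n : ℕ} (Q : Matrix (Fin n) (Fin n) (ZMod 2)) : qmf Q 0 = 0 := by
  simp [qmf]

lemma qmf_shift {n : ℕ} (Q : Matrix (Fin n) (Fin n) (ZMod 2)) (x d : Fin n → ZMod 2) :
    qmf Q (x + d) = qmf Q x + qmf Q d + ∑ i, x i * ((Q + Qᵀ).mulVec d) i := by
  have h1 : ∑ i, x i * ((Q + Qᵀ).mulVec d) i
      = (∑ i, ∑ j, x i * Q i j * d j) + (∑ i, ∑ j, d i * Q i j * x j) := by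
    have e1 : ∑ i, x i * ((Q + Qᵀ).mulVec d) i
        = (∑ i, ∑ j, x i * Q i j * d j) + (∑ i, ∑ j, x i * Q j i * d j) := by
      simp only [Matrix.mulVec, dotProduct, Matrix.add_apply, Matrix.transpose_apply,
        Finset.mul_sum, mul_add, add_mul, Finset.sum_add_distrib]
      congr 1 <;> exact Finset.sum_congr rfl fun i _ => Finset.sum_congr rfl fun j _ => by ring
    have e2 : (∑ i, ∑ j, x i * Q j i * d j) = ∑ i, ∑ j, d i * Q i j * x j := by
      rw [Finset.sum_comm]
      exact Finset.sum_congr rfl fun i _ => Finset.sum_congr rfl fun j _ => by ring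
    rw [e1, e2]
  rw [h1]
  simp only [qmf, Pi.add_apply, add_mul, mul_add, Finset.sum_add_distrib]
  abel

lemma zmod2_add_id : ∀ a b c e f : ZMod 2, (a + b) + (a + c + e + (b + f)) = c + f + e := by
  decide

lemma gsum_sq {n : ℕ} (Q : Matrix (Fin n) (Fin n) (ZMod 2)) (w : Fin n → ZMod 2) :
    (∑ x : Fin n → ZMod 2, chi (qmf Q x + ∑ r, w r * x r)) ^ 2
    = 2 ^ n * ∑ d ∈ Finset.univ.filter (fun d : Fin n → ZMod 2 => (Q + Qᵀ).mulVec d = 0),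
        chi (qmf Q d + ∑ r, w r * d r) := by
  set B := Q + Qᵀ with hB
  set f : (Fin n → ZMod 2) → ℝ := fun x => chi (qmf Q x + ∑ r, w r * x r) with hf
  have step1 : (∑ x, f x) ^ 2 = ∑ x : Fin n → ZMod 2, ∑ d : Fin n → ZMod 2, f x * f (x + d) := by
    rw [sq, Finset.sum_mul_sum]
    refine Finset.sum_congr rfl fun x _ => ?_
    rw [← Equiv.sum_comp (Equiv.addLeft x) (fun y => f x * f y)]
    simp [Equiv.coe_addLeft]
  have step2 : ∀ x d : Fin n → ZMod 2, f x * f (x + d)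
      = chi (qmf Q d + ∑ r, w r * d r) * chi (∑ i, x i * B.mulVec d i) := by
    intro x d
    rw [hf]; dsimp only
    rw [← chi_add, ← chi_add]
    congr 1
    rw [qmf_shift, ← hB]
    have hw : ∑ r, w r * (x + d) r = (∑ r, w r * x r) + ∑ r, w r * d r := by
      simp [mul_add, Finset.sum_add_distrib]
    rw [hw]
    exact zmod2_add_id _ _ _ _ _
  rw [step1]
  simp only [step2]
  rw [Finset.sum_comm]
  have step3 : ∀ d : Fin n → ZMod 2,
      ∑ x : Fin n → ZMod 2, chi (qmf Q d + ∑ r, w r * d r) * chi (∑ i, x i * B.mulVec d i)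
      = chi (qmf Q d + ∑ r, w r * d r) * (if B.mulVec d = 0 then (2:ℝ) ^ n else 0) := by
    intro d
    rw [← Finset.mul_sum, sum_chi_linear]
  simp only [step3]
  rw [Finset.mul_sum, Finset.sum_filter]
  refine Finset.sum_congr rfl fun d _ => ?_
  split_ifs <;> ring

lemma card_ker {n : ℕ} (B : Matrix (Fin n) (Fin n) (ZMod 2)) :
    (Finset.univ.filter (fun d : Fin n → ZMod 2 => B.mulVec d = 0)).card
      = 2 ^ (n - B.rank) := by
  classical
  have h1 : (Finset.univ.filter (fun d : Fin n → ZMod 2 => B.mulVec d = 0)).card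
      = Fintype.card {d : Fin n → ZMod 2 // B.mulVec d = 0} := (Fintype.card_subtype _).symm
  haveI : Fintype (LinearMap.ker B.mulVecLin) := Fintype.ofFinite _
  have e : {d : Fin n → ZMod 2 // B.mulVec d = 0} ≃ LinearMap.ker B.mulVecLin :=
    Equiv.subtypeEquivRight (by intro d; simp [LinearMap.mem_ker, Matrix.mulVecLin_apply])
  have h2 : Fintype.card {d : Fin n → ZMod 2 // B.mulVec d = 0}
      = Fintype.card (LinearMap.ker B.mulVecLin) := Fintype.card_congr e
  have h3 : Fintype.card (LinearMap.ker B.mulVecLin)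
      = 2 ^ Module.finrank (ZMod 2) (LinearMap.ker B.mulVecLin) := by
    have := Module.card_eq_pow_finrank (K := ZMod 2) (V := LinearMap.ker B.mulVecLin)
    rwa [ZMod.card] at this
  have h4 : Module.finrank (ZMod 2) (LinearMap.ker B.mulVecLin) = n - B.rank := by
    have h5 := LinearMap.finrank_range_add_finrank_ker B.mulVecLin
    rw [Module.finrank_fintype_fun_eq_card, Fintype.card_fin] at h5
    have : B.rank = Module.finrank (ZMod 2) (LinearMap.range B.mulVecLin) := rfl
    omega
  rw [h1, h2, h3, h4]

lemma zmod2_self_add : ∀ a : ZMod 2, a + a = 0 := by decide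

lemma inner_eq {n : ℕ} (Q₁ Q₂ : Matrix (Fin n) (Fin n) (ZMod 2)) (v₁ v₂ : Fin n → ZMod 2) :
    ∑ x : Fin n → ZMod 2, gcol Q₁ v₁ x * gcol Q₂ v₂ x
      = (1 / 2 ^ n) * ∑ x : Fin n → ZMod 2,
          chi (qmf (Q₁ + Q₂) x + ∑ r, (v₁ + v₂) r * x r) := by
  rw [Finset.mul_sum]
  refine Finset.sum_congr rfl fun x _ => ?_
  have hsqrt : (1 / Real.sqrt (2 ^ n)) * (1 / Real.sqrt (2 ^ n)) = 1 / 2 ^ n := by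
    rw [div_mul_div_comm, one_mul, Real.mul_self_sqrt (by positivity)]
  have hchi : ∀ Q v, gcol Q v x = (1 / Real.sqrt (2 ^ n)) * chi (qmf Q x + ∑ r, v r * x r) :=
    fun Q v => rfl
  rw [hchi, hchi, mul_mul_mul_comm, hsqrt, ← chi_add]
  congr 2
  rw [qmf_add_matrix]
  have : ∑ r, (v₁ + v₂) r * x r = (∑ r, v₁ r * x r) + ∑ r, v₂ r * x r := by
    simp [add_mul, Finset.sum_add_distrib]
  rw [this]; ring

lemma numeric_eq (n rmin : ℕ) (h : rmin ≤ n) :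
    ((1:ℝ) / 2 ^ n) ^ 2 * (2 ^ n * 2 ^ (n - rmin)) = (1 / Real.sqrt (2 ^ rmin)) ^ 2 := by
  have h1 : (Real.sqrt ((2:ℝ) ^ rmin)) ^ 2 = 2 ^ rmin := Real.sq_sqrt (by positivity)
  have h2 : (2:ℝ) ^ (n - rmin) * 2 ^ rmin = 2 ^ n := by
    rw [← pow_add]; congr 1; omega
  have hs : Real.sqrt ((2:ℝ) ^ rmin) ≠ 0 := by positivity
  have hn : ((2:ℝ) ^ n) ≠ 0 := by positivity
  field_simp
  rw [h1, h2]

/-- The coherence of the Golay spreading matrix `Φ` with blocks defined by the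
quadratic forms of permutations `π₁,...,π_L` equals `1/√(2^{r_min})`, where `r_min`
is the minimum rank over `Z_2` of the symplectic matrices `B_{k₁,k₂}` of pairs of
blocks. (Coherence is expressed as: all inner products of distinct columns are
bounded by `1/√(2^{r_min})` in absolute value, and the bound is attained.) -/
theorem stmt11 (m L : ℕ) (hL : 2 ≤ L)
    (π : Fin L → Equiv.Perm (Fin (m + 1)))
    (Q : Fin L → Matrix (Fin (m + 1)) (Fin (m + 1)) (ZMod 2))
    (hupper : ∀ k, ∀ i j : Fin (m + 1), (j : ℕ) < (i : ℕ) → Q k i j = 0)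
    (hform : ∀ k x, qmf (Q k) x = ∑ r : Fin m, x ((π k) r.castSucc) * x ((π k) r.succ))
    (rmin : ℕ)
    (hmin : ∀ k₁ k₂, k₁ ≠ k₂ → rmin ≤ ((Q k₁ + Q k₂) + (Q k₁ + Q k₂)ᵀ).rank)
    (hattain : ∃ k₁ k₂, k₁ ≠ k₂ ∧ ((Q k₁ + Q k₂) + (Q k₁ + Q k₂)ᵀ).rank = rmin) :
    (∀ k₁ k₂ (v₁ v₂ : Fin (m + 1) → ZMod 2), (k₁, v₁) ≠ (k₂, v₂) →
        |∑ x : Fin (m + 1) → ZMod 2, gcol (Q k₁) v₁ x * gcol (Q k₂) v₂ x|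
          ≤ 1 / Real.sqrt (2 ^ rmin))
      ∧ (∃ k₁ k₂, ∃ v₁ v₂ : Fin (m + 1) → ZMod 2, (k₁, v₁) ≠ (k₂, v₂) ∧
        |∑ x : Fin (m + 1) → ZMod 2, gcol (Q k₁) v₁ x * gcol (Q k₂) v₂ x|
          = 1 / Real.sqrt (2 ^ rmin)) := by
  classical
  obtain ⟨a₁, a₂, ha, harank⟩ := hattain
  have hrmin_le : rmin ≤ m + 1 := by
    have h := Matrix.rank_le_card_width ((Q a₁ + Q a₂) + (Q a₁ + Q a₂)ᵀ)
    rwa [harank, Fintype.card_fin] at h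
  have hbound_pos : (0:ℝ) < 1 / Real.sqrt (2 ^ rmin) := by positivity
  constructor
  · -- upper bound
    rintro k₁ k₂ v₁ v₂ hne
    rw [inner_eq]
    by_cases hk : k₁ = k₂
    · -- same block: columns orthogonal
      subst hk
      have hv : v₁ ≠ v₂ := fun h => hne (by rw [h])
      have hq : ∀ x, qmf (Q k₁ + Q k₁) x = 0 := by
        intro x; rw [qmf_add_matrix]; exact zmod2_self_add _
      have hw : v₁ + v₂ ≠ 0 := by
        intro h
        apply hv
        funext i
        have := congrFun h i
        rcases zmod2_cases (v₁ i) with h1 | h1 <;> rcases zmod2_cases (v₂ i) with h2 | h2 <;>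
          simp_all
      have : ∑ x : Fin (m + 1) → ZMod 2, chi (qmf (Q k₁ + Q k₁) x + ∑ r, (v₁ + v₂) r * x r) = 0 := by
        have e : ∀ x : Fin (m + 1) → ZMod 2,
            qmf (Q k₁ + Q k₁) x + ∑ r, (v₁ + v₂) r * x r
              = ∑ r, x r * (v₁ + v₂) r := by
          intro x
          rw [hq, zero_add]
          exact Finset.sum_congr rfl fun r _ => mul_comm _ _
        simp only [e]
        rw [sum_chi_linear, if_neg hw]
      rw [this, mul_zero, abs_zero]
      exact le_of_lt hbound_pos
    · -- different blocks
      set Q' := Q k₁ + Q k₂ with hQ'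
      set S := ∑ x : Fin (m + 1) → ZMod 2, chi (qmf Q' x + ∑ r, (v₁ + v₂) r * x r) with hS
      have hSsq := gsum_sq Q' (v₁ + v₂)
      have hcard := card_ker (Q' + Q'ᵀ)
      have hrank : rmin ≤ (Q' + Q'ᵀ).rank := hmin k₁ k₂ hk
      have hT : ∑ d ∈ Finset.univ.filter (fun d : Fin (m + 1) → ZMod 2 => (Q' + Q'ᵀ).mulVec d = 0),
          chi (qmf Q' d + ∑ r, (v₁ + v₂) r * d r) ≤ 2 ^ ((m + 1) - rmin) := by
        calc _ ≤ ∑ d ∈ Finset.univ.filter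
              (fun d : Fin (m + 1) → ZMod 2 => (Q' + Q'ᵀ).mulVec d = 0), |chi (qmf Q' d + ∑ r, (v₁ + v₂) r * d r)| :=
            Finset.sum_le_sum fun d _ => le_abs_self _
          _ = ((Finset.univ.filter (fun d : Fin (m + 1) → ZMod 2 => (Q' + Q'ᵀ).mulVec d = 0)).card : ℝ) := by
            simp [abs_chi]
          _ = (2:ℝ) ^ ((m + 1) - (Q' + Q'ᵀ).rank) := by rw [hcard]; push_cast; ring
          _ ≤ (2:ℝ) ^ ((m + 1) - rmin) := by
            apply pow_le_pow_right₀ (by norm_num)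
            omega
      have hS2 : S ^ 2 ≤ 2 ^ (m + 1) * 2 ^ ((m + 1) - rmin) := by
        rw [hSsq]
        have : (0:ℝ) ≤ 2 ^ (m + 1) := by positivity
        nlinarith [hT]
      have hfin : ((1:ℝ) / 2 ^ (m + 1) * S) ^ 2 ≤ (1 / Real.sqrt (2 ^ rmin)) ^ 2 := by
        rw [mul_pow, ← numeric_eq (m + 1) rmin hrmin_le]
        have : (0:ℝ) ≤ ((1:ℝ) / 2 ^ (m + 1)) ^ 2 := by positivity
        nlinarith [hS2]
      calc |1 / 2 ^ (m + 1) * S| = Real.sqrt ((1 / 2 ^ (m + 1) * S) ^ 2) := (Real.sqrt_sq_eq_abs _).symm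
        _ ≤ Real.sqrt ((1 / Real.sqrt (2 ^ rmin)) ^ 2) := Real.sqrt_le_sqrt hfin
        _ = 1 / Real.sqrt (2 ^ rmin) := Real.sqrt_sq (le_of_lt hbound_pos)
  · -- attainment
    set Q' := Q a₁ + Q a₂ with hQ'
    set B := Q' + Q'ᵀ with hB
    set K := LinearMap.ker B.mulVecLin with hK
    have hker : ∀ d : Fin (m + 1) → ZMod 2, d ∈ K ↔ B.mulVec d = 0 := by
      intro d; rw [LinearMap.mem_ker, Matrix.mulVecLin_apply]
    -- the quadratic form restricted to the kernel is linear
    have hadd : ∀ d d' : Fin (m + 1) → ZMod 2, d' ∈ K → qmf Q' (d + d') = qmf Q' d + qmf Q' d' := by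
      intro d d' hd'
      rw [qmf_shift, (hker d').1 hd']
      simp
    let f : K →ₗ[ZMod 2] ZMod 2 :=
      { toFun := fun d => qmf Q' d.1
        map_add' := fun d d' => hadd d.1 d'.1 d'.2
        map_smul' := by
          intro c d
          rcases zmod2_cases c with h | h <;> subst h
          · simp [qmf_zero_arg]
          · simp }
    obtain ⟨g, hg⟩ := LinearMap.exists_extend f
    set w : Fin (m + 1) → ZMod 2 := fun i => g (fun j => if i = j then 1 else 0) with hw
    have hgw : ∀ x : Fin (m + 1) → ZMod 2, g x = ∑ i, x i * w i := by
      intro x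
      rw [LinearMap.pi_apply_eq_sum_univ g x]
      exact Finset.sum_congr rfl fun i _ => by rw [smul_eq_mul, hw]
    have hgk : ∀ d : Fin (m + 1) → ZMod 2, d ∈ K → g d = qmf Q' d := by
      intro d hd
      have := congrFun (congrArg DFunLike.coe hg) ⟨d, hd⟩
      simpa [f] using this
    refine ⟨a₁, a₂, w, 0, fun h => ha (congrArg Prod.fst h), ?_⟩
    rw [inner_eq]
    have hw0 : w + 0 = w := by simp
    rw [hw0]
    set S := ∑ x : Fin (m + 1) → ZMod 2, chi (qmf Q' x + ∑ r, w r * x r) with hS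
    have hSsq := gsum_sq Q' w
    have hT : ∑ d ∈ Finset.univ.filter (fun d : Fin (m + 1) → ZMod 2 => B.mulVec d = 0),
        chi (qmf Q' d + ∑ r, w r * d r) = 2 ^ ((m + 1) - rmin) := by
      have e : ∀ d ∈ Finset.univ.filter (fun d : Fin (m + 1) → ZMod 2 => B.mulVec d = 0),
          chi (qmf Q' d + ∑ r, w r * d r) = 1 := by
        intro d hd
        rw [Finset.mem_filter] at hd
        have hdk : d ∈ K := (hker d).2 hd.2
        have h1 : ∑ r, w r * d r = qmf Q' d := by
          rw [← hgk d hdk, hgw]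
          exact Finset.sum_congr rfl fun r _ => mul_comm _ _
        rw [h1, zmod2_self_add, chi_zero]
      rw [Finset.sum_congr rfl e, Finset.sum_const, nsmul_eq_mul, mul_one, card_ker B, hB, harank]
      push_cast; ring
    have hS2 : S ^ 2 = 2 ^ (m + 1) * 2 ^ ((m + 1) - rmin) := by rw [hSsq, hT]
    have hsq : ((1:ℝ) / 2 ^ (m + 1) * S) ^ 2 = (1 / Real.sqrt (2 ^ rmin)) ^ 2 := by
      rw [mul_pow, ← numeric_eq (m + 1) rmin hrmin_le, hS2]
    calc |1 / 2 ^ (m + 1) * S| = Real.sqrt ((1 / 2 ^ (m + 1) * S) ^ 2) := (Real.sqrt_sq_eq_abs _).symm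
      _ = Real.sqrt ((1 / Real.sqrt (2 ^ rmin)) ^ 2) := by rw [hsq]
      _ = 1 / Real.sqrt (2 ^ rmin) := Real.sqrt_sq (le_of_lt hbound_pos)
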